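/- Fix 0 < α < 1 and x > 0, and let ν₁(y) = (1/2) y^{α/2}. Then lim_{n → ∞} √n · ∫_{1}^{∞} α y^{-1-α} (1 - exp(-n^{-1/α} x y)) ν₁(y) dy = Γ(1 - α/2) · x^{α/2} = (-α Γ(-α/2)) · ν₁(x), where Γ is the real Gamma function and the limit is over real n → ∞ (equivalently over natural numbers n → ∞). -/

import Mathlib

open MeasureTheory

open Set Real Filter

lemma aux_cont_h {β c : ℝ} (hc : 0 < c) :
    ContinuousOn (fun t : ℝ => t ^ (-1 - β) * (1 - Real.exp (-t))) (Set.Ioi c) := by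
  intro t ht
  have ht0 : t ≠ 0 := (hc.trans ht).ne'
  exact ((Real.continuousAt_rpow_const t _ (Or.inl ht0)).continuousWithinAt).mul
    ((continuous_const.sub (Real.continuous_exp.comp continuous_neg)).continuousWithinAt)

lemma aux_int_h {β c : ℝ} (hβ : -1 - β < -1) (hc : 0 < c) :
    IntegrableOn (fun t : ℝ => t ^ (-1 - β) * (1 - Real.exp (-t))) (Set.Ioi c) := by
  have h1 : IntegrableOn (fun t : ℝ => t ^ (-1 - β)) (Set.Ioi c) :=
    integrableOn_Ioi_rpow_of_lt hβ hc
  refine h1.mono' ((aux_cont_h hc).aestronglyMeasurable measurableSet_Ioi) ?_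
  filter_upwards [ae_restrict_mem measurableSet_Ioi] with t ht
  have ht0 : 0 < t := hc.trans ht
  have h2 : 0 ≤ 1 - Real.exp (-t) := by
    have := Real.exp_le_one_iff.mpr (by linarith : -t ≤ 0); linarith
  have h3 : 1 - Real.exp (-t) ≤ 1 := by linarith [Real.exp_pos (-t)]
  rw [norm_mul, norm_of_nonneg (Real.rpow_nonneg ht0.le _), norm_of_nonneg h2]
  nlinarith [Real.rpow_nonneg ht0.le (-1 - β)]

lemma aux_int_g {β c : ℝ} (hβ : β < 1) (hc : 0 ≤ c) :
    IntegrableOn (fun t : ℝ => Real.exp (-t) * t ^ (-β)) (Set.Ioi c) := by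
  have h := Real.GammaIntegral_convergent (s := 1 - β) (by linarith)
  simp only [show (1:ℝ) - β - 1 = -β from by ring] at h
  exact h.mono_set (Set.Ioi_subset_Ioi hc)

lemma aux_deriv {β t : ℝ} (hβ : β ≠ 0) (ht : 0 < t) :
    HasDerivAt (fun t : ℝ => -(1/β) * (t ^ (-β) * (1 - Real.exp (-t))))
      (t ^ (-1 - β) * (1 - Real.exp (-t)) - (1/β) * (Real.exp (-t) * t ^ (-β))) t := by
  have h1 : HasDerivAt (fun t : ℝ => t ^ (-β)) (-β * t ^ (-β - 1)) t :=
    Real.hasDerivAt_rpow_const (Or.inl ht.ne')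
  have h2 : HasDerivAt (fun t : ℝ => 1 - Real.exp (-t)) (Real.exp (-t)) t := by
    have := ((Real.hasDerivAt_exp (-t)).comp t (hasDerivAt_neg t)).const_sub 1
    simpa using this
  have h3 := ((h1.mul h2).const_mul (-(1/β)))
  refine h3.congr_deriv ?_
  have e : t ^ (-β - 1) = t ^ (-1 - β) := by ring_nf
  rw [e]
  field_simp
  ring

lemma aux_F_tendsto {β : ℝ} (hβ : 0 < β) :
    Tendsto (fun t : ℝ => -(1/β) * (t ^ (-β) * (1 - Real.exp (-t)))) atTop (nhds 0) := by
  have h1 : Tendsto (fun t : ℝ => t ^ (-β)) atTop (nhds 0) := tendsto_rpow_neg_atTop hβ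
  have h2 : Tendsto (fun t : ℝ => 1 - Real.exp (-t)) atTop (nhds 1) := by
    simpa using (tendsto_exp_neg_atTop_nhds_zero.const_sub 1)
  have := (h1.mul h2).const_mul (-(1/β))
  simpa using this

lemma aux_ibp {β : ℝ} (hβ0 : 0 < β) (hβ1 : β < 1) {c : ℝ} (hc : 0 < c) :
    ∫ t in Set.Ioi c, t ^ (-1 - β) * (1 - Real.exp (-t)) =
      (1/β) * (c ^ (-β) * (1 - Real.exp (-c))) +
        (1/β) * ∫ t in Set.Ioi c, Real.exp (-t) * t ^ (-β) := by
  have hint_h := aux_int_h (β := β) (by linarith) hc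
  have hint_g := aux_int_g (β := β) hβ1 hc.le
  have hint : IntegrableOn
      (fun t : ℝ => t ^ (-1 - β) * (1 - Real.exp (-t)) - (1/β) * (Real.exp (-t) * t ^ (-β)))
      (Set.Ioi c) := hint_h.sub (hint_g.const_mul _)
  have key := integral_Ioi_of_hasDerivAt_of_tendsto'
    (f := fun t : ℝ => -(1/β) * (t ^ (-β) * (1 - Real.exp (-t))))
    (f' := fun t : ℝ => t ^ (-1 - β) * (1 - Real.exp (-t)) - (1/β) * (Real.exp (-t) * t ^ (-β)))
    (fun t ht => aux_deriv hβ0.ne' (hc.trans_le ht)) hint (aux_F_tendsto hβ0)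
  rw [integral_sub hint_h (hint_g.const_mul _), integral_const_mul] at key
  linarith [key]

lemma aux_rpow_tendsto {q : ℝ} (hq : 0 < q) :
    Tendsto (fun c : ℝ => c ^ q) (nhdsWithin 0 (Set.Ioi 0)) (nhds 0) := by
  have h := (Real.continuousAt_rpow_const 0 q (Or.inr hq.le)).tendsto
  rw [Real.zero_rpow hq.ne'] at h
  exact h.mono_left nhdsWithin_le_nhds

lemma aux_small_piece {β : ℝ} (hβ0 : 0 < β) (hβ1 : β < 1) {c : ℝ} (hc : 0 < c) :
    ∫ t in Set.Ioc (0:ℝ) c, Real.exp (-t) * t ^ (-β) ≤ c ^ (1 - β) / (1 - β) := by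
  have hint_g : IntegrableOn (fun t : ℝ => Real.exp (-t) * t ^ (-β)) (Set.Ioc 0 c) :=
    (aux_int_g hβ1 le_rfl).mono_set Set.Ioc_subset_Ioi_self
  have hint_r : IntegrableOn (fun t : ℝ => t ^ (-β)) (Set.Ioc 0 c) :=
    (intervalIntegral.intervalIntegrable_rpow' (by linarith : (-1:ℝ) < -β)).1
  have hmono : ∫ t in Set.Ioc (0:ℝ) c, Real.exp (-t) * t ^ (-β) ≤
      ∫ t in Set.Ioc (0:ℝ) c, t ^ (-β) := by
    refine setIntegral_mono_on hint_g hint_r measurableSet_Ioc (fun t ht => ?_)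
    have ht0 : 0 < t := ht.1
    have h1 : Real.exp (-t) ≤ 1 := Real.exp_le_one_iff.mpr (by linarith)
    nlinarith [Real.rpow_nonneg ht0.le (-β), Real.exp_pos (-t)]
  have hval : ∫ t in Set.Ioc (0:ℝ) c, t ^ (-β) = c ^ (1 - β) / (1 - β) := by
    rw [← intervalIntegral.integral_of_le hc.le,
      integral_rpow (Or.inl (by linarith : (-1:ℝ) < -β))]
    rw [Real.zero_rpow (by linarith : -β + 1 ≠ 0)]
    norm_num
    ring_nf
  linarith [hmono, hval.le, hval.ge]

lemma aux_split {β : ℝ} (hβ1 : β < 1) {c : ℝ} (hc : 0 < c) :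
    ∫ t in Set.Ioi c, Real.exp (-t) * t ^ (-β) =
      Real.Gamma (1 - β) - ∫ t in Set.Ioc (0:ℝ) c, Real.exp (-t) * t ^ (-β) := by
  have hGamma : Real.Gamma (1 - β) = ∫ t in Set.Ioi (0:ℝ), Real.exp (-t) * t ^ (-β) := by
    rw [Real.Gamma_eq_integral (by linarith : (0:ℝ) < 1 - β)]
    simp only [show (1:ℝ) - β - 1 = -β from by ring]
  have hunion : Set.Ioc (0:ℝ) c ∪ Set.Ioi c = Set.Ioi (0:ℝ) := Set.Ioc_union_Ioi_eq_Ioi hc.le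
  have hdisj : Disjoint (Set.Ioc (0:ℝ) c) (Set.Ioi c) := Set.Ioc_disjoint_Ioi le_rfl
  have h1 : IntegrableOn (fun t : ℝ => Real.exp (-t) * t ^ (-β)) (Set.Ioc 0 c) :=
    (aux_int_g hβ1 le_rfl).mono_set Set.Ioc_subset_Ioi_self
  have h2 : IntegrableOn (fun t : ℝ => Real.exp (-t) * t ^ (-β)) (Set.Ioi c) :=
    aux_int_g hβ1 hc.le
  rw [hGamma, ← hunion, setIntegral_union hdisj measurableSet_Ioi h1 h2]
  ring

lemma aux_L {β : ℝ} (hβ0 : 0 < β) (hβ1 : β < 1) :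
    Tendsto (fun c : ℝ => ∫ t in Set.Ioi c, t ^ (-1 - β) * (1 - Real.exp (-t)))
      (nhdsWithin 0 (Set.Ioi 0)) (nhds (Real.Gamma (1 - β) / β)) := by
  -- term 1 : (1/β) c^{-β}(1-e^{-c}) → 0
  have ht1 : Tendsto (fun c : ℝ => (1/β) * (c ^ (-β) * (1 - Real.exp (-c))))
      (nhdsWithin 0 (Set.Ioi 0)) (nhds 0) := by
    have hb : Tendsto (fun c : ℝ => (1/β) * c ^ (1 - β)) (nhdsWithin 0 (Set.Ioi 0)) (nhds 0) := by
      have := (aux_rpow_tendsto (by linarith : (0:ℝ) < 1 - β)).const_mul (1/β)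
      simpa using this
    refine squeeze_zero' ?_ ?_ hb
    · filter_upwards [self_mem_nhdsWithin] with c hc
      have hc0 : (0:ℝ) < c := hc
      have : Real.exp (-c) ≤ 1 := Real.exp_le_one_iff.mpr (by linarith)
      have h2 : (0:ℝ) ≤ c ^ (-β) := Real.rpow_nonneg hc0.le _
      have h5 : (0:ℝ) ≤ 1 - Real.exp (-c) := by linarith
      positivity
    · filter_upwards [self_mem_nhdsWithin] with c hc
      have hc0 : (0:ℝ) < c := hc
      have h1 : 1 - Real.exp (-c) ≤ c := by linarith [Real.add_one_le_exp (-c)]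
      have h2 : (0:ℝ) ≤ c ^ (-β) := Real.rpow_nonneg hc0.le _
      have h3 : c ^ (-β) * c = c ^ (1 - β) := by
        rw [show (1:ℝ) - β = -β + 1 by ring, Real.rpow_add hc0, Real.rpow_one]
      have h4 : c ^ (-β) * (1 - Real.exp (-c)) ≤ c ^ (1 - β) := by
        calc c ^ (-β) * (1 - Real.exp (-c)) ≤ c ^ (-β) * c := by nlinarith
        _ = c ^ (1 - β) := h3
      have hβ' : (0:ℝ) < 1/β := by positivity
      calc (1/β) * (c ^ (-β) * (1 - Real.exp (-c))) ≤ (1/β) * c ^ (1 - β) := by nlinarith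
        _ = (1/β) * c ^ (1 - β) := rfl
  -- term 2 : (1/β) ∫_{Ioi c} g → (1/β) Γ(1-β)
  have ht2 : Tendsto (fun c : ℝ => (1/β) * ∫ t in Set.Ioi c, Real.exp (-t) * t ^ (-β))
      (nhdsWithin 0 (Set.Ioi 0)) (nhds ((1/β) * Real.Gamma (1 - β))) := by
    have hsmall : Tendsto (fun c : ℝ => ∫ t in Set.Ioc (0:ℝ) c, Real.exp (-t) * t ^ (-β))
        (nhdsWithin 0 (Set.Ioi 0)) (nhds 0) := by
      have hb : Tendsto (fun c : ℝ => c ^ (1 - β) / (1 - β)) (nhdsWithin 0 (Set.Ioi 0)) (nhds 0) := by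
        have := (aux_rpow_tendsto (by linarith : (0:ℝ) < 1 - β)).div_const (1 - β)
        simpa using this
      refine squeeze_zero' ?_ ?_ hb
      · filter_upwards [self_mem_nhdsWithin] with c hc
        refine setIntegral_nonneg measurableSet_Ioc (fun t ht => ?_)
        have := Real.rpow_nonneg ht.1.le (-β)
        positivity
      · filter_upwards [self_mem_nhdsWithin] with c hc
        exact aux_small_piece hβ0 hβ1 hc
    have := ((tendsto_const_nhds (x := Real.Gamma (1 - β))).sub hsmall).const_mul (1/β)
    rw [sub_zero] at this
    refine this.congr' ?_
    filter_upwards [self_mem_nhdsWithin] with c hc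
    rw [aux_split hβ1 hc]
  have hsum := ht1.add ht2
  rw [zero_add] at hsum
  have he : (1/β) * Real.Gamma (1 - β) = Real.Gamma (1 - β) / β := by ring
  rw [he] at hsum
  refine hsum.congr' ?_
  filter_upwards [self_mem_nhdsWithin] with c hc
  exact (aux_ibp hβ0 hβ1 hc).symm

/-- Principal eigenmode: with `ν₁(y) = (1/2) y^{α/2}`,
`√n · ∫_1^∞ α y^{-1-α} (1 - exp(-n^{-1/α} x y)) ν₁(y) dy → Γ(1-α/2) x^{α/2}`
as `n → ∞`, and `Γ(1-α/2) x^{α/2} = (-α Γ(-α/2)) ν₁(x)`. -/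
theorem stmt5 (α : ℝ) (h0 : 0 < α) (h1 : α < 1) (x : ℝ) (hx : 0 < x) :
    Filter.Tendsto
      (fun n : ℝ => Real.sqrt n *
        ∫ y in Set.Ioi (1 : ℝ),
          α * y ^ (-1 - α) * (1 - Real.exp (-(n ^ (-1/α) * x * y))) * ((1/2) * y ^ (α/2)))
      Filter.atTop (nhds (Real.Gamma (1 - α/2) * x ^ (α/2))) ∧
    Real.Gamma (1 - α/2) * x ^ (α/2) = (-α * Real.Gamma (-α/2)) * ((1/2) * x ^ (α/2)) := by
  set β := α/2 with hβdef
  have hβ0 : 0 < β := by positivity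
  have hβ1 : β < 1 := by rw [hβdef]; linarith
  constructor
  · -- the limit
    have hc_tendsto : Tendsto (fun n : ℝ => n ^ (-1/α) * x) atTop
        (nhdsWithin 0 (Set.Ioi 0)) := by
      rw [tendsto_nhdsWithin_iff]
      constructor
      · have h := (tendsto_rpow_neg_atTop (by positivity : (0:ℝ) < 1/α)).mul_const x
        rw [zero_mul] at h
        simpa [neg_div] using h
      · filter_upwards [eventually_gt_atTop (0:ℝ)] with n hn
        exact mul_pos (Real.rpow_pos_of_pos hn _) hx
    have hL := ((aux_L hβ0 hβ1).comp hc_tendsto).const_mul ((α/2) * x ^ β)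
    have hval : (α/2) * x ^ β * (Real.Gamma (1 - β) / β) = Real.Gamma (1 - β) * x ^ β := by
      rw [hβdef]; field_simp
    rw [hval] at hL
    refine hL.congr' ?_
    filter_upwards [eventually_gt_atTop (0:ℝ)] with n hn
    set c : ℝ := n ^ (-1/α) * x with hcdef
    have hc : 0 < c := mul_pos (Real.rpow_pos_of_pos hn _) hx
    have hstep : (∫ y in Set.Ioi (1:ℝ),
        α * y ^ (-1 - α) * (1 - Real.exp (-(n ^ (-1/α) * x * y))) * ((1/2) * y ^ (α/2)))
        = ((α/2) * c ^ (1+β)) * (c⁻¹ * ∫ t in Set.Ioi c, t ^ (-1-β) * (1 - Real.exp (-t))) := by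
      have hcongr : ∀ y ∈ Set.Ioi (1:ℝ),
          α * y ^ (-1 - α) * (1 - Real.exp (-(n ^ (-1/α) * x * y))) * ((1/2) * y ^ (α/2))
          = ((α/2) * c ^ (1+β)) * ((c * y) ^ (-1-β) * (1 - Real.exp (-(c * y)))) := by
        intro y hy
        have hy0 : (0:ℝ) < y := lt_trans one_pos hy
        have e1 : y ^ (-1-α) * y ^ (α/2) = y ^ (-1-β) := by
          rw [← Real.rpow_add hy0, hβdef]; ring_nf
        have e2 : (c*y) ^ (-1-β) = c ^ (-1-β) * y ^ (-1-β) := Real.mul_rpow hc.le hy0.le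
        have e3 : c ^ (1+β) * c ^ (-1-β) = 1 := by
          rw [← Real.rpow_add hc, show (1+β) + (-1-β) = 0 by ring, Real.rpow_zero]
        have harg : n ^ (-1/α) * x * y = c * y := by rw [hcdef]
        rw [harg, e2]
        calc α * y ^ (-1 - α) * (1 - Real.exp (-(c*y))) * ((1/2) * y ^ (α/2))
            = (α/2) * (y ^ (-1-α) * y ^ (α/2)) * (1 - Real.exp (-(c*y))) := by ring
          _ = (α/2) * y ^ (-1-β) * (1 - Real.exp (-(c*y))) := by rw [e1]
          _ = (α/2) * ((c ^ (1+β) * c ^ (-1-β)) * y ^ (-1-β)) * (1 - Real.exp (-(c*y))) := by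
              rw [e3]; ring
          _ = (α/2) * c ^ (1+β) * (c ^ (-1-β) * y ^ (-1-β) * (1 - Real.exp (-(c*y)))) := by ring
      rw [setIntegral_congr_fun measurableSet_Ioi hcongr, integral_const_mul,
        integral_comp_mul_left_Ioi (fun t => t ^ (-1-β) * (1 - Real.exp (-t))) 1 hc,
        mul_one, smul_eq_mul]
    have hconst : Real.sqrt n * ((α/2) * c ^ (1+β)) * c⁻¹ = (α/2) * x ^ β := by
      have hcb : c ^ (1+β) * c⁻¹ = c ^ β := by
        rw [← Real.rpow_neg_one c, ← Real.rpow_add hc, show (1+β) + (-1) = β by ring]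
      have hxc : c ^ β = n ^ ((-1/α) * β) * x ^ β := by
        rw [hcdef, Real.mul_rpow (Real.rpow_nonneg hn.le _) hx.le, ← Real.rpow_mul hn.le]
      have hexp : (1:ℝ)/2 + (-1/α) * β = 0 := by rw [hβdef]; field_simp; norm_num
      have hnn : Real.sqrt n * n ^ ((-1/α) * β) = 1 := by
        rw [Real.sqrt_eq_rpow, ← Real.rpow_add hn, hexp, Real.rpow_zero]
      calc Real.sqrt n * ((α/2) * c ^ (1+β)) * c⁻¹
          = (α/2) * (Real.sqrt n * (c ^ (1+β) * c⁻¹)) := by ring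
        _ = (α/2) * (Real.sqrt n * (n ^ ((-1/α) * β) * x ^ β)) := by rw [hcb, hxc]
        _ = (α/2) * ((Real.sqrt n * n ^ ((-1/α) * β)) * x ^ β) := by ring
        _ = (α/2) * x ^ β := by rw [hnn]; ring
    simp only [Function.comp_apply]
    rw [hstep, ← hconst]
    ring
  · -- Gamma recurrence
    have h := Real.Gamma_add_one (s := -α/2)
      (by intro hz; rw [div_eq_zero_iff] at hz; simp at hz; linarith)
    have e : (1:ℝ) - β = -α/2 + 1 := by rw [hβdef]; ring
    rw [e, h, hβdef]; ring
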